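/- Let f(x) = (αx + β)(γx + λ) with α, β, γ, λ ∈ ℤ, gcd(α,β) = gcd(γ,λ) = gcd(α,γ) = 1, and suppose f has no double root (i.e., αλ − βγ ≠ 0). Fix d ∈ ℕ and an integer r with d ∣ f(r) and such that for every prime power p^k ∣ d, either p^k ∣ αr + β or p^k ∣ γr + λ. Define f_d(x) = f(r + dx)/d ∈ ℤ[x]. Then the gcd of the linear and quadratic coefficients of f_d divides αλ − βγ; in particular cont(f_d) ≤ |αλ − βγ|. -/

import Mathlib

/-- Content bound for the auxiliary polynomial: if `f(x) = (αx+β)(γx+λ)` with the gcd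
conditions, no double root, `d ∣ f(r)`, and for every prime power `p^k ∣ d` either
`p^k ∣ αr+β` or `p^k ∣ γr+λ`, then the gcd of the linear and quadratic coefficients of
`f_d(x) = f(r+dx)/d`, namely `gcd(2αγr + (αλ+βγ), dαγ)`, divides `αλ − βγ`. -/
theorem content_of_auxiliary_divides (α β γ lam : ℤ)
    (h1 : IsCoprime α β) (h2 : IsCoprime γ lam) (h3 : IsCoprime α γ)
    (hD : α * lam - β * γ ≠ 0) (d : ℕ) (hd : 0 < d) (r : ℤ)
    (hdr : (d : ℤ) ∣ (α * r + β) * (γ * r + lam))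
    (hroots : ∀ p k : ℕ, p.Prime → (p : ℤ) ^ k ∣ (d : ℤ) →
      (p : ℤ) ^ k ∣ (α * r + β) ∨ (p : ℤ) ^ k ∣ (γ * r + lam)) :
    (Int.gcd (2 * α * γ * r + (α * lam + β * γ)) ((d : ℤ) * α * γ) : ℤ) ∣ (α * lam - β * γ) := by
  set A : ℤ := α * r + β with hA
  set C : ℤ := γ * r + lam with hC
  set g : ℕ := Int.gcd (2 * α * γ * r + (α * lam + β * γ)) ((d : ℤ) * α * γ) with hg
  have hgs : (g : ℤ) ∣ α * C + γ * A := by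
    have : (g : ℤ) ∣ 2 * α * γ * r + (α * lam + β * γ) := Int.gcd_dvd_left _ _
    convert this using 1; rw [hA, hC]; ring
  have hgd : (g : ℤ) ∣ (d : ℤ) * α * γ := Int.gcd_dvd_right _ _
  have key : (g : ℤ) ∣ α * C - γ * A := by
    rw [Int.natCast_dvd]
    rw [Nat.dvd_iff_prime_pow_dvd_dvd]
    intro p k hp hpk
    rw [← Int.natCast_dvd]; push_cast
    have hp' : p.Prime := Nat.prime_iff.mpr hp.prime
    have hpZ : Prime (p : ℤ) := Nat.prime_iff_prime_int.mp hp'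
    have hks : ((p : ℤ)) ^ k ∣ α * C + γ * A := by
      refine dvd_trans ?_ hgs
      exact_mod_cast (Int.natCast_dvd_natCast.mpr hpk : ((p^k : ℕ) : ℤ) ∣ (g : ℤ))
    have hkd : ((p : ℤ)) ^ k ∣ (d : ℤ) * α * γ := by
      refine dvd_trans ?_ hgd
      exact_mod_cast (Int.natCast_dvd_natCast.mpr hpk : ((p^k : ℕ) : ℤ) ∣ (g : ℤ))
    rcases Nat.eq_zero_or_pos k with rfl | hk
    · simpa using one_dvd _
    have hp1 : (p : ℤ) ∣ (p : ℤ) ^ k := dvd_pow_self _ hk.ne'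
    by_cases hpα : (p : ℤ) ∣ α
    · exfalso
      have hpγ : ¬ (p : ℤ) ∣ γ := fun h => hpZ.not_unit (h3.isUnit_of_dvd' hpα h)
      have hpβ : ¬ (p : ℤ) ∣ β := fun h => hpZ.not_unit (h1.isUnit_of_dvd' hpα h)
      have h1' : (p : ℤ) ∣ γ * A := by
        have := (hp1.trans hks)
        have : (p : ℤ) ∣ α * C + γ * A - α * C := by
          exact dvd_sub this (Dvd.dvd.mul_right hpα C)
        simpa using this
      rcases hpZ.dvd_mul.mp h1' with h | h
      · exact hpγ h
      · have : (p : ℤ) ∣ β := by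
          have : (p : ℤ) ∣ A - α * r := dvd_sub h (Dvd.dvd.mul_right hpα r)
          simpa [hA] using this
        exact hpβ this
    by_cases hpγ : (p : ℤ) ∣ γ
    · exfalso
      have hplam : ¬ (p : ℤ) ∣ lam := fun h => hpZ.not_unit (h2.isUnit_of_dvd' hpγ h)
      have h1' : (p : ℤ) ∣ α * C := by
        have := (hp1.trans hks)
        have : (p : ℤ) ∣ α * C + γ * A - γ * A := by
          exact dvd_sub this (Dvd.dvd.mul_right hpγ A)
        simpa using this
      rcases hpZ.dvd_mul.mp h1' with h | h
      · exact hpα h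
      · have : (p : ℤ) ∣ lam := by
          have : (p : ℤ) ∣ C - γ * r := dvd_sub h (Dvd.dvd.mul_right hpγ r)
          simpa [hC] using this
        exact hplam this
    -- p divides neither α nor γ
    have hcop : IsCoprime ((p : ℤ) ^ k) (α * γ) := by
      refine IsCoprime.pow_left (hpZ.coprime_iff_not_dvd.mpr ?_)
      intro h
      rcases hpZ.dvd_mul.mp h with h | h
      · exact hpα h
      · exact hpγ h
    have hkdd : ((p : ℤ)) ^ k ∣ (d : ℤ) := by
      have : ((p : ℤ)) ^ k ∣ (d : ℤ) * (α * γ) := by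
        convert hkd using 1; ring
      exact hcop.dvd_of_dvd_mul_right this
    rcases hroots p k hp' hkdd with h | h
    · have h2' : (p : ℤ) ^ k ∣ α * C := by
        have : (p : ℤ) ^ k ∣ α * C + γ * A - γ * A := dvd_sub hks (Dvd.dvd.mul_left h γ)
        simpa using this
      exact dvd_sub h2' (Dvd.dvd.mul_left h γ)
    · have h2' : (p : ℤ) ^ k ∣ γ * A := by
        have : (p : ℤ) ^ k ∣ α * C + γ * A - α * C := dvd_sub hks (Dvd.dvd.mul_left h α)
        simpa using this
      have h3' : (p : ℤ) ^ k ∣ α * C := by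
        have : (p : ℤ) ^ k ∣ α * C + γ * A - γ * A := dvd_sub hks h2'
        simpa using this
      exact dvd_sub h3' h2'
  have : α * lam - β * γ = α * C - γ * A := by rw [hA, hC]; ring
  rw [this]; exact key
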